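/- Let μ be the Haar probability measure on SO(3). Let ψ̃, f̃ : SO(3) → ℝ be continuous, and suppose the filter ψ̃ is constant on right Z-cosets, i.e. ψ̃(R·Z(θ)) = ψ̃(R) for all R ∈ SO(3) and θ ∈ ℝ. Let θ₀ : SO(3) → ℝ be a measurable function that is constant on right Z-cosets, i.e. θ₀(R·Z(γ)) = θ₀(R) for all R ∈ SO(3), γ ∈ ℝ. Then for every Q, P ∈ SO(3): ∫₀^{2π} ∫_{SO(3)} ψ̃(R⁻¹·Q·P) · f̃(Q⁻¹·R·Z(θ₀(R)+γ)) dμ(R) dγ = ∫₀^{2π} ∫_{SO(3)} ψ̃(R⁻¹·P) · f̃(R·Z(γ)) dμ(R) dγ. (This is the point-wise rotation invariance of the spherical voxel convolution: [ψ ⋆ L_Q f](Qp) = [ψ ⋆ f](p).) -/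

import Mathlib

open Matrix MeasureTheory

/-- The 3×3 rotation matrix about the z-axis by angle `θ`. -/
noncomputable def Zr (θ : ℝ) : Matrix (Fin 3) (Fin 3) ℝ :=
  !![Real.cos θ, -Real.sin θ, 0; Real.sin θ, Real.cos θ, 0; 0, 0, 1]

/-- The 3×3 rotation matrix about the y-axis by angle `β`. -/
noncomputable def Yr (β : ℝ) : Matrix (Fin 3) (Fin 3) ℝ :=
  !![Real.cos β, 0, Real.sin β; 0, 1, 0; -Real.sin β, 0, Real.cos β]

lemma Zr_mem_unitary (θ : ℝ) : Zr θ ∈ Matrix.unitaryGroup (Fin 3) ℝ := by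
  rw [Matrix.mem_unitaryGroup_iff']
  ext i j
  fin_cases i <;> fin_cases j <;>
    simp [Zr, Matrix.mul_apply, Fin.sum_univ_three, Matrix.one_apply, Matrix.star_apply] <;>
    nlinarith [Real.sin_sq_add_cos_sq θ]

lemma Zr_det (θ : ℝ) : (Zr θ).det = 1 := by
  simp [Zr, Matrix.det_fin_three]
  nlinarith [Real.sin_sq_add_cos_sq θ]

lemma Yr_mem_unitary (β : ℝ) : Yr β ∈ Matrix.unitaryGroup (Fin 3) ℝ := by
  rw [Matrix.mem_unitaryGroup_iff']
  ext i j
  fin_cases i <;> fin_cases j <;>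
    simp [Yr, Matrix.mul_apply, Fin.sum_univ_three, Matrix.one_apply, Matrix.star_apply] <;>
    nlinarith [Real.sin_sq_add_cos_sq β]

lemma Yr_det (β : ℝ) : (Yr β).det = 1 := by
  simp [Yr, Matrix.det_fin_three]
  nlinarith [Real.sin_sq_add_cos_sq β]

instance : IsTopologicalGroup (Matrix.unitaryGroup (Fin 3) ℝ) where
  continuous_mul := by
    apply continuous_induced_rng.2
    exact ((continuous_subtype_val.comp continuous_fst).matrix_mul
      (continuous_subtype_val.comp continuous_snd))
  continuous_inv := by
    apply continuous_induced_rng.2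
    show Continuous (fun a : Matrix.unitaryGroup (Fin 3) ℝ =>
      ((a⁻¹ : Matrix.unitaryGroup (Fin 3) ℝ) : Matrix (Fin 3) (Fin 3) ℝ))
    have : (fun a : Matrix.unitaryGroup (Fin 3) ℝ =>
          ((a⁻¹ : Matrix.unitaryGroup (Fin 3) ℝ) : Matrix (Fin 3) (Fin 3) ℝ))
        = fun a : Matrix.unitaryGroup (Fin 3) ℝ => star (a.val) := rfl
    rw [this]
    exact continuous_star.comp continuous_subtype_val

/-- `SO(3)`: the group of real 3×3 orthogonal matrices of determinant one, as a
subgroup of the orthogonal (real unitary) group. -/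
noncomputable def SO3 : Subgroup (Matrix.unitaryGroup (Fin 3) ℝ) where
  carrier := {A | (A : Matrix (Fin 3) (Fin 3) ℝ).det = 1}
  one_mem' := by simp
  mul_mem' := by
    intro a b ha hb
    simp only [Set.mem_setOf_eq, Submonoid.coe_mul, Matrix.det_mul] at *
    rw [ha, hb, mul_one]
  inv_mem' := by
    intro a ha
    simp only [Set.mem_setOf_eq] at *
    have : ((a⁻¹ : Matrix.unitaryGroup (Fin 3) ℝ) : Matrix (Fin 3) (Fin 3) ℝ)
        = star ((a : Matrix (Fin 3) (Fin 3) ℝ)) := rfl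
    rw [this]
    simpa [Matrix.star_eq_conjTranspose, Matrix.det_conjTranspose] using ha

noncomputable instance : MeasurableSpace SO3 := borel SO3
instance : BorelSpace SO3 := ⟨rfl⟩

/-- The z-axis rotation `Z(θ)` as an element of `SO3`. -/
noncomputable def zElem (θ : ℝ) : SO3 :=
  ⟨⟨Zr θ, Zr_mem_unitary θ⟩, Zr_det θ⟩

/-- The y-axis rotation `Y(β)` as an element of `SO3`. -/
noncomputable def yElem (β : ℝ) : SO3 :=
  ⟨⟨Yr β, Yr_mem_unitary β⟩, Yr_det β⟩


lemma continuous_Zr : Continuous Zr := by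
  apply continuous_matrix
  intro i j
  fin_cases i <;> fin_cases j <;> simp [Zr] <;> fun_prop

lemma isCompact_unitarySet :
    IsCompact {A : Matrix (Fin 3) (Fin 3) ℝ | A ∈ Matrix.unitaryGroup (Fin 3) ℝ} := by
  have hsub : {A : Matrix (Fin 3) (Fin 3) ℝ | A ∈ Matrix.unitaryGroup (Fin 3) ℝ} ⊆
      Set.univ.pi fun _ : Fin 3 => Set.univ.pi fun _ : Fin 3 => Set.Icc (-1:ℝ) 1 := by
    intro A hA
    simp only [Set.mem_setOf_eq, Matrix.mem_unitaryGroup_iff] at hA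
    intro i _ j _
    have h1 : ∑ k, A i k * A i k = 1 := by
      have := congrFun (congrFun hA i) i
      simpa [Matrix.mul_apply, Matrix.one_apply, Matrix.star_apply] using this
    have h2 : A i j * A i j ≤ 1 := by
      rw [← h1]
      exact Finset.single_le_sum (f := fun k => A i k * A i k)
        (fun k _ => mul_self_nonneg _) (Finset.mem_univ j)
    constructor <;> nlinarith
  have hclosed : IsClosed {A : Matrix (Fin 3) (Fin 3) ℝ | A ∈ Matrix.unitaryGroup (Fin 3) ℝ} := by
    have : {A : Matrix (Fin 3) (Fin 3) ℝ | A ∈ Matrix.unitaryGroup (Fin 3) ℝ}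
        = (fun A : Matrix (Fin 3) (Fin 3) ℝ => A * star A) ⁻¹' {1} := by
      ext A; simp [Matrix.mem_unitaryGroup_iff]
    rw [this]
    exact IsClosed.preimage (continuous_id.matrix_mul continuous_star) isClosed_singleton
  exact IsCompact.of_isClosed_subset
    (isCompact_univ_pi fun _ => isCompact_univ_pi fun _ => isCompact_Icc) hclosed hsub

instance : CompactSpace (Matrix.unitaryGroup (Fin 3) ℝ) :=
  isCompact_iff_compactSpace.mp isCompact_unitarySet

instance : CompactSpace SO3 := by
  have h : IsClosed {a : Matrix.unitaryGroup (Fin 3) ℝ | a ∈ SO3} := by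
    have : {a : Matrix.unitaryGroup (Fin 3) ℝ | a ∈ SO3}
        = (fun a : Matrix.unitaryGroup (Fin 3) ℝ =>
            (a : Matrix (Fin 3) (Fin 3) ℝ).det) ⁻¹' {1} := rfl
    rw [this]
    exact IsClosed.preimage (continuous_subtype_val.matrix_det) isClosed_singleton
  exact isCompact_iff_compactSpace.mp h.isCompact

instance : IsTopologicalGroup SO3 := by infer_instance
instance : SecondCountableTopology (Matrix (Fin 3) (Fin 3) ℝ) :=
  inferInstanceAs (SecondCountableTopology (Fin 3 → Fin 3 → ℝ))

instance : SecondCountableTopology (Matrix.unitaryGroup (Fin 3) ℝ) :=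
  TopologicalSpace.secondCountableTopology_induced _ _ Subtype.val

instance : SecondCountableTopology SO3 :=
  TopologicalSpace.secondCountableTopology_induced _ _ Subtype.val
set_option synthInstance.maxHeartbeats 1000000 in
instance : MeasurableMul₂ SO3 := by infer_instance
set_option synthInstance.maxHeartbeats 1000000 in
instance : OpensMeasurableSpace (ℝ × SO3) := by infer_instance

lemma continuous_zElem : Continuous zElem :=
  Continuous.subtype_mk (Continuous.subtype_mk continuous_Zr _) _

lemma zElem_periodic : Function.Periodic zElem (2 * Real.pi) := by
  intro θ
  apply Subtype.ext
  apply Subtype.ext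
  show Zr (θ + 2 * Real.pi) = Zr θ
  ext i j
  fin_cases i <;> fin_cases j <;>
    simp [Zr, Real.cos_add_two_pi, Real.sin_add_two_pi]

/-- **Point-wise rotation invariance of the spherical voxel convolution.**
For the Haar probability measure `μ` on `SO(3)`, a continuous filter `ψ` constant on
right `Z`-cosets, a continuous signal `f`, and a measurable coset-angle function `θ₀`
constant on right `Z`-cosets, the convolution satisfies `[ψ ⋆ L_Q f](Qp) = [ψ ⋆ f](p)`. -/
theorem spherical_voxel_convolution_rotation_invariant
    (μ : Measure SO3) [μ.IsHaarMeasure] [IsProbabilityMeasure μ]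
    (ψ f : SO3 → ℝ) (hψc : Continuous ψ) (hfc : Continuous f)
    (hψ : ∀ (R : SO3) (θ : ℝ), ψ (R * zElem θ) = ψ R)
    (θ₀ : SO3 → ℝ) (hθ₀m : Measurable θ₀)
    (hθ₀ : ∀ (R : SO3) (γ : ℝ), θ₀ (R * zElem γ) = θ₀ R)
    (Q P : SO3) :
    (∫ γ in (0:ℝ)..(2 * Real.pi), ∫ R, ψ (R⁻¹ * Q * P) * f (Q⁻¹ * R * zElem (θ₀ R + γ)) ∂μ)
      = ∫ γ in (0:ℝ)..(2 * Real.pi), ∫ R, ψ (R⁻¹ * P) * f (R * zElem γ) ∂μ := by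
  
  have h2pi : (0:ℝ) ≤ 2 * Real.pi := by positivity
  set ν := volume.restrict (Set.Ioc (0:ℝ) (2 * Real.pi)) with hν
  haveI : IsFiniteMeasure ν := by
    constructor
    rw [hν, Measure.restrict_apply_univ]
    exact measure_Ioc_lt_top
  obtain ⟨x₁, hx₁⟩ : ∃ x, ∀ y, ‖ψ y‖ ≤ ‖ψ x‖ := by
    obtain ⟨x, -, hx⟩ := isCompact_univ.exists_isMaxOn ⟨1, trivial⟩ (hψc.norm.continuousOn)
    exact ⟨x, fun y => hx (Set.mem_univ y)⟩
  obtain ⟨x₂, hx₂⟩ : ∃ x, ∀ y, ‖f y‖ ≤ ‖f x‖ := by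
    obtain ⟨x, -, hx⟩ := isCompact_univ.exists_isMaxOn ⟨1, trivial⟩ (hfc.norm.continuousOn)
    exact ⟨x, fun y => hx (Set.mem_univ y)⟩
  have hmeas1 : Measurable (Function.uncurry fun (γ : ℝ) (R : SO3) =>
      ψ (R⁻¹ * Q * P) * f (Q⁻¹ * R * zElem (θ₀ R + γ))) := by
    apply Measurable.mul
    · exact (hψc.comp (((continuous_snd.inv).mul continuous_const).mul
        continuous_const)).measurable
    · apply hfc.measurable.comp
      exact Measurable.mul (measurable_const.mul measurable_snd)
        (continuous_zElem.measurable.comp ((hθ₀m.comp measurable_snd).add measurable_fst))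
  have hmeas2 : Measurable (Function.uncurry fun (γ : ℝ) (R : SO3) =>
      ψ (R⁻¹ * P) * f (R * zElem γ)) := by
    apply Measurable.mul
    · exact (hψc.comp ((continuous_snd.inv).mul continuous_const)).measurable
    · exact (hfc.comp (continuous_snd.mul (continuous_zElem.comp continuous_fst))).measurable
  have hbound : ∀ (a b : SO3), ‖ψ a * f b‖ ≤ ‖ψ x₁‖ * ‖f x₂‖ := by
    intro a b
    rw [norm_mul]
    exact mul_le_mul (hx₁ a) (hx₂ b) (norm_nonneg _) ((norm_nonneg _).trans (hx₁ a))
  have hint1 : Integrable (Function.uncurry fun (γ : ℝ) (R : SO3) =>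
      ψ (R⁻¹ * Q * P) * f (Q⁻¹ * R * zElem (θ₀ R + γ))) (ν.prod μ) :=
    ⟨hmeas1.aestronglyMeasurable,
      HasFiniteIntegral.of_bounded (ae_of_all _ fun p => hbound _ _)⟩
  have hint2 : Integrable (Function.uncurry fun (γ : ℝ) (R : SO3) =>
      ψ (R⁻¹ * P) * f (R * zElem γ)) (ν.prod μ) :=
    ⟨hmeas2.aestronglyMeasurable,
      HasFiniteIntegral.of_bounded (ae_of_all _ fun p => hbound _ _)⟩
  calc
    (∫ γ in (0:ℝ)..(2 * Real.pi), ∫ R, ψ (R⁻¹ * Q * P) * f (Q⁻¹ * R * zElem (θ₀ R + γ)) ∂μ)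
        = ∫ γ, ∫ R, ψ (R⁻¹ * Q * P) * f (Q⁻¹ * R * zElem (θ₀ R + γ)) ∂μ ∂ν := by
          rw [intervalIntegral.integral_of_le h2pi, hν]
    _ = ∫ R, ∫ γ, ψ (R⁻¹ * Q * P) * f (Q⁻¹ * R * zElem (θ₀ R + γ)) ∂ν ∂μ :=
          integral_integral_swap hint1
    _ = ∫ R, ψ (R⁻¹ * Q * P) * (∫ γ in (0:ℝ)..(2 * Real.pi), f (Q⁻¹ * R * zElem γ)) ∂μ := by
          refine integral_congr_ae (ae_of_all _ fun R => ?_)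
          beta_reduce
          rw [hν, MeasureTheory.integral_const_mul]
          congr 1
          rw [← intervalIntegral.integral_of_le h2pi]
          have hper : Function.Periodic (fun γ => f (Q⁻¹ * R * zElem γ)) (2 * Real.pi) :=
            fun x => by simp only [zElem_periodic x]
          rw [intervalIntegral.integral_comp_add_left (fun γ => f (Q⁻¹ * R * zElem γ)),
            add_zero, hper.intervalIntegral_add_eq (θ₀ R) 0, zero_add]
    _ = ∫ R, ψ ((Q * R)⁻¹ * Q * P) *
          (∫ γ in (0:ℝ)..(2 * Real.pi), f (Q⁻¹ * (Q * R) * zElem γ)) ∂μ :=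
          (integral_mul_left_eq_self (μ := μ) (fun R => ψ (R⁻¹ * Q * P) *
            ∫ γ in (0:ℝ)..(2 * Real.pi), f (Q⁻¹ * R * zElem γ)) Q).symm
    _ = ∫ R, ψ (R⁻¹ * P) * (∫ γ in (0:ℝ)..(2 * Real.pi), f (R * zElem γ)) ∂μ := by
          refine integral_congr_ae (ae_of_all _ fun R => ?_)
          simp [mul_assoc, _root_.mul_inv_rev, inv_mul_cancel_left]
    _ = ∫ R, ∫ γ, ψ (R⁻¹ * P) * f (R * zElem γ) ∂ν ∂μ := by
          refine integral_congr_ae (ae_of_all _ fun R => ?_)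
          beta_reduce
          rw [intervalIntegral.integral_of_le h2pi, ← MeasureTheory.integral_const_mul, ← hν]
    _ = ∫ γ, ∫ R, ψ (R⁻¹ * P) * f (R * zElem γ) ∂μ ∂ν := (integral_integral_swap hint2).symm
    _ = ∫ γ in (0:ℝ)..(2 * Real.pi), ∫ R, ψ (R⁻¹ * P) * f (R * zElem γ) ∂μ := by
          rw [intervalIntegral.integral_of_le h2pi, hν]
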